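/- The braid group B₃ is not residually free. -/

import Mathlib

open Finset List

namespace MagnusAux

variable {β : Type*} [DecidableEq β]

/-- "Noncommutative power series" carrier: integer-valued functions on words. -/
def M (β : Type*) := List β → ℤ

instance : One (M β) := ⟨fun w => if w = [] then 1 else 0⟩
instance : Mul (M β) :=
  ⟨fun f g w => ∑ k ∈ Finset.range (w.length + 1), f (w.take k) * g (w.drop k)⟩

lemma one_apply (w : List β) : (1 : M β) w = if w = [] then 1 else 0 := rfl

lemma mul_apply (f g : M β) (w : List β) :
    (f * g) w = ∑ k ∈ Finset.range (w.length + 1), f (w.take k) * g (w.drop k) := rfl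

lemma one_apply_nil : (1 : M β) [] = 1 := by simp [one_apply]

lemma one_apply_ne {w : List β} (h : w ≠ []) : (1 : M β) w = 0 := by simp [one_apply, h]

instance : Monoid (M β) where
  one_mul f := by
    funext w
    rw [mul_apply]
    rw [Finset.sum_eq_single_of_mem 0 (Finset.mem_range.2 (Nat.succ_pos _))]
    · simp [one_apply]
    · intro k hk hk0
      have : w.take k ≠ [] := by
        simp only [ne_eq, List.take_eq_nil_iff]
        push_neg
        refine ⟨hk0, ?_⟩
        rintro rfl
        simp at hk
        omega
      rw [one_apply_ne this, zero_mul]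
  mul_one f := by
    funext w
    rw [mul_apply]
    rw [Finset.sum_eq_single_of_mem w.length (Finset.mem_range.2 (Nat.lt_succ_self _))]
    · simp [one_apply]
    · intro k hk hk0
      have hlt : k < w.length := by
        rcases Nat.lt_or_ge k w.length with h | h
        · exact h
        · exact absurd (le_antisymm (Nat.lt_succ_iff.1 (Finset.mem_range.1 hk)) h) hk0
      have : w.drop k ≠ [] := by
        simp only [ne_eq, List.drop_eq_nil_iff]
        omega
      rw [one_apply_ne this, mul_zero]
  mul_assoc f g h := by
    funext w
    rw [mul_apply, mul_apply]
    simp only [mul_apply, Finset.sum_mul, Finset.mul_sum]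
    rw [Finset.sum_sigma', Finset.sum_sigma']
    refine Finset.sum_nbij' (fun p => ⟨p.2, p.1 - p.2⟩) (fun p => ⟨p.1 + p.2, p.1⟩) ?_ ?_ ?_ ?_ ?_
    · rintro ⟨k, j⟩ hp
      simp only [Finset.mem_sigma, Finset.mem_range, List.length_take, List.length_drop] at hp ⊢
      omega
    · rintro ⟨j, t⟩ hp
      simp only [Finset.mem_sigma, Finset.mem_range, List.length_take, List.length_drop] at hp ⊢
      omega
    · rintro ⟨k, j⟩ hp
      simp only [Finset.mem_sigma, Finset.mem_range, List.length_take] at hp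
      simp only [Sigma.mk.inj_iff, heq_eq_eq]
      exact ⟨by omega, trivial⟩
    · rintro ⟨j, t⟩ hp
      simp only [Finset.mem_sigma, Finset.mem_range, List.length_drop] at hp
      simp only [Sigma.mk.inj_iff, heq_eq_eq]
      exact ⟨trivial, by omega⟩
    · rintro ⟨k, j⟩ hp
      simp only [Finset.mem_sigma, Finset.mem_range, List.length_take] at hp
      have h1 : k ≤ w.length := Nat.lt_succ_iff.1 hp.1
      have h2 : j ≤ k := by omega
      have e1 : (w.take k).take j = w.take j := by
        rw [List.take_take]; congr 1; omega
      have e2 : (w.take k).drop j = (w.drop j).take (k - j) := List.drop_take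
      have e3 : (w.drop j).drop (k - j) = w.drop k := by
        rw [List.drop_drop]; congr 1; omega
      rw [e1, e2, e3, mul_assoc]


/-! ### helper sum lemma -/

lemma sum_first_two (F : ℕ → ℤ) (n : ℕ) (hn : 1 ≤ n)
    (h : ∀ k, 2 ≤ k → k ≤ n → F k = 0) :
    ∑ k ∈ Finset.range (n + 1), F k = F 0 + F 1 := by
  have h2n : 2 ≤ n + 1 := by omega
  rw [Finset.range_eq_Ico, ← Finset.sum_Ico_consecutive F (Nat.zero_le 2) h2n]
  have hz : ∑ k ∈ Finset.Ico 2 (n+1), F k = 0 :=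
    Finset.sum_eq_zero (fun k hk => by
      rw [Finset.mem_Ico] at hk; exact h k hk.1 (by omega))
  have h2 : Finset.Ico 0 2 = Finset.range 2 := by rw [Finset.range_eq_Ico]
  rw [hz, add_zero, h2, Finset.sum_range_succ, Finset.sum_range_succ,
    Finset.sum_range_zero, zero_add]

/-! ### generators and their inverses -/

def uPos (i : β) : M β := fun w => if w = [] ∨ w = [i] then 1 else 0

def uNeg (i : β) : M β :=
  fun w => if w = List.replicate w.length i then (-1)^w.length else 0

lemma uPos_nil (i : β) : uPos i [] = 1 := by simp [uPos]

lemma uPos_single (i : β) : uPos i [i] = 1 := by simp [uPos]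

lemma uPos_of_len2 {i : β} {w : List β} (h : 2 ≤ w.length) : uPos i w = 0 := by
  rw [uPos, if_neg]
  rintro (rfl | rfl) <;> simp at h

lemma uPos_ne_zero {i : β} {w : List β} (h : uPos i w ≠ 0) : w = [] ∨ w = [i] := by
  by_contra hc
  exact h (by rw [uPos]; exact if_neg hc)

lemma uNeg_replicate (i : β) (m : ℕ) : uNeg i (List.replicate m i) = (-1)^m := by
  simp [uNeg]

lemma uNeg_ne_zero {i : β} {w : List β} (h : uNeg i w ≠ 0) :
    w = List.replicate w.length i := by
  by_contra hc
  exact h (by rw [uNeg]; exact if_neg hc)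

lemma uNeg_cons_ne {i a : β} {t : List β} (h : a ≠ i) : uNeg i (a :: t) = 0 := by
  rw [uNeg, if_neg]
  intro hc
  rw [List.length_cons, List.replicate_succ] at hc
  exact h (List.cons_eq_cons.1 hc).1

lemma uPos_mul_uNeg (i : β) : uPos i * uNeg i = 1 := by
  funext w
  cases w with
  | nil =>
    show ∑ k ∈ Finset.range 1, _ = _
    rw [Finset.sum_range_one, one_apply_nil]
    show uPos i [] * uNeg i [] = 1
    rw [uPos_nil, show ([]:List β) = List.replicate 0 i from rfl, uNeg_replicate]
    norm_num
  | cons a t =>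
    rw [mul_apply, one_apply_ne (List.cons_ne_nil a t)]
    have hlen : (a :: t).length = t.length + 1 := rfl
    rw [hlen, sum_first_two _ _ (by omega) (fun k h2 hkn => by
      have hl : 2 ≤ ((a::t).take k).length := by
        rw [List.length_take, hlen]; omega
      rw [uPos_of_len2 hl, zero_mul])]
    have e0 : (a::t).take 0 = [] := rfl
    have e0' : (a::t).drop 0 = a :: t := rfl
    have e1 : (a::t).take 1 = [a] := rfl
    have e1' : (a::t).drop 1 = t := rfl
    rw [e0, e0', e1, e1', uPos_nil, one_mul]
    by_cases hai : a = i
    · subst hai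
      rw [uPos_single, one_mul]
      by_cases ht : t = List.replicate t.length a
      · have h1 : a :: t = List.replicate (a :: t).length a := by
          rw [hlen, List.replicate_succ]
          exact congrArg (a :: ·) ht
        rw [uNeg, if_pos h1, uNeg, if_pos ht, hlen]
        rw [pow_succ]
        ring
      · have h1 : uNeg a (a :: t) = 0 := by
          rw [uNeg, if_neg]
          intro hc
          rw [hlen, List.replicate_succ] at hc
          exact ht (by
            have := (List.cons_eq_cons.1 hc).2
            rw [this]
            simp)
        rw [h1, uNeg, if_neg ht]
        ring
    · rw [uNeg_cons_ne hai, show uPos i [a] = 0 from by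
        rw [uPos, if_neg]; rintro (h | h); · simp at h
        · exact hai (List.cons_eq_cons.1 h).1]
      ring

/-! ### reversal -/

def revM (f : M β) : M β := fun w => f w.reverse

lemma revM_mul (f g : M β) : revM (f * g) = revM g * revM f := by
  funext w
  show (f * g) w.reverse = _
  rw [mul_apply, mul_apply]
  have hlen : w.reverse.length = w.length := by simp
  rw [hlen]
  refine Finset.sum_nbij' (fun k => w.length - k) (fun k => w.length - k) ?_ ?_ ?_ ?_ ?_
  · intro k hk
    simp only [Finset.mem_range] at hk ⊢
    omega
  · intro k hk
    simp only [Finset.mem_range] at hk ⊢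
    omega
  · intro k hk
    simp only [Finset.mem_range] at hk
    show w.length - (w.length - k) = k
    omega
  · intro k hk
    simp only [Finset.mem_range] at hk
    show w.length - (w.length - k) = k
    omega
  · intro k hk
    simp only [Finset.mem_range] at hk
    have hk' : k ≤ w.length := by omega
    have e1 : w.reverse.take k = (w.drop (w.length - k)).reverse := by
      rw [List.reverse_drop]
      congr 1
      omega
    have e2 : w.reverse.drop k = (w.take (w.length - k)).reverse := by
      rw [List.reverse_take]
      congr 1
      omega
    rw [e1, e2]
    show f _ * g _ = revM g (w.take (w.length - k)) * revM f (w.drop (w.length - k))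
    simp only [revM]
    ring

lemma revM_one : revM (1 : M β) = 1 := by
  funext w
  show (1 : M β) w.reverse = (1 : M β) w
  rw [one_apply, one_apply]
  simp

lemma revM_uPos (i : β) : revM (uPos i) = uPos i := by
  funext w
  show uPos i w.reverse = uPos i w
  rw [uPos, uPos]
  congr 1
  simp only [eq_iff_iff, List.reverse_eq_nil_iff]
  constructor
  · rintro (h | h)
    · exact Or.inl h
    · right
      rw [← List.reverse_reverse w, h]
      rfl
  · rintro (rfl | rfl) <;> simp
  
lemma revM_uNeg (i : β) : revM (uNeg i) = uNeg i := by
  funext w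
  show uNeg i w.reverse = uNeg i w
  rw [uNeg, uNeg]
  have hlen : w.reverse.length = w.length := by simp
  rw [hlen]
  congr 1
  simp only [eq_iff_iff]
  constructor
  · intro h
    calc w = w.reverse.reverse := (List.reverse_reverse w).symm
    _ = (List.replicate w.length i).reverse := by rw [h]
    _ = List.replicate w.length i := List.reverse_replicate ..
  · intro h
    calc w.reverse = (List.replicate w.length i).reverse := congrArg List.reverse h
    _ = List.replicate w.length i := List.reverse_replicate ..

lemma uNeg_mul_uPos (i : β) : uNeg i * uPos i = 1 := by
  have := congrArg revM (uPos_mul_uNeg i)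
  rwa [revM_mul, revM_one, revM_uPos, revM_uNeg] at this

/-! ### the Magnus homomorphism -/

def U (i : β) : (M β)ˣ :=
  ⟨uPos i, uNeg i, uPos_mul_uNeg i, uNeg_mul_uPos i⟩

def mu : FreeGroup β →* (M β)ˣ := FreeGroup.lift (fun i => U i)

def ev : M β →* ℤ where
  toFun f := f []
  map_one' := one_apply_nil
  map_mul' f g := by
    show (f * g) [] = f [] * g []
    rw [mul_apply]
    simp

lemma mu_val_nil (g : FreeGroup β) : ((mu g : (M β)ˣ) : M β) [] = 1 := by
  have hker : (Units.map (ev : M β →* ℤ)).comp (mu (β := β)) = 1 := by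
    apply FreeGroup.ext_hom
    intro a
    apply Units.ext
    simp only [MonoidHom.comp_apply, MonoidHom.one_apply, Units.coe_map, Units.val_one, mu,
      FreeGroup.lift_apply_of]
    exact uPos_nil a
  have : (Units.map (ev : M β →* ℤ)) (mu g) = 1 := by
    have := congrArg (fun h => h g) hker
    simpa using this
  have := congrArg Units.val this
  rwa [Units.coe_map] at this


/-! ### powers of generators -/

lemma uPos_pow_support (i : β) (r : ℕ) :
    ∀ w : List β, (uPos i ^ r) w ≠ 0 → w = List.replicate w.length i ∧ w.length ≤ r := by
  induction r with
  | zero =>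
    intro w hw
    rw [pow_zero] at hw
    have : w = [] := by
      by_contra hc
      exact hw (one_apply_ne hc)
    subst this
    exact ⟨rfl, le_refl _⟩
  | succ r ih =>
    intro w hw
    rw [pow_succ, mul_apply] at hw
    obtain ⟨k, -, hk⟩ := Finset.exists_ne_zero_of_sum_ne_zero hw
    have h1 : (uPos i ^ r) (w.take k) ≠ 0 := fun h => hk (by rw [h, zero_mul])
    have h2 : uPos i (w.drop k) ≠ 0 := fun h => hk (by rw [h, mul_zero])
    obtain ⟨ht, hlt⟩ := ih _ h1
    have hw2 := uPos_ne_zero h2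
    have hsplit : w = w.take k ++ w.drop k := (List.take_append_drop k w).symm
    obtain ⟨m, hm, hmr⟩ : ∃ m, w.take k = List.replicate m i ∧ m ≤ r :=
      ⟨(w.take k).length, ht, hlt⟩
    rcases hw2 with hd | hd
    · have hw : w = List.replicate m i := by rw [hsplit, hd, List.append_nil, hm]
      rw [hw]
      refine ⟨by simp, ?_⟩
      simp only [List.length_replicate]
      omega
    · have hw : w = List.replicate (m+1) i := by
        rw [hsplit, hd, hm, List.replicate_succ']
      rw [hw]
      refine ⟨by simp, ?_⟩
      simp only [List.length_replicate]
      omega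

lemma uPos_pow_full (i : β) (r : ℕ) : (uPos i ^ r) (List.replicate r i) = 1 := by
  induction r with
  | zero => rw [pow_zero]; exact one_apply_nil
  | succ r ih =>
    rw [pow_succ, mul_apply]
    have hlen : (List.replicate (r+1) i).length = r + 1 := by simp
    rw [hlen]
    refine (Finset.sum_eq_single_of_mem r (Finset.mem_range.2 (by omega)) ?side).trans ?main
    case main =>
      rw [List.take_replicate, List.drop_replicate]
      have h1 : min r (r+1) = r := by omega
      have h2 : r + 1 - r = 1 := by omega
      rw [h1, h2, ih]
      rw [show List.replicate 1 i = [i] from rfl, uPos_single, one_mul]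
    case side =>
      intro k hk hkr
      rw [Finset.mem_range] at hk
      rw [List.take_replicate, List.drop_replicate]
      rcases Nat.lt_or_ge k r with h | h
      · have : 2 ≤ (List.replicate (r + 1 - k) i).length := by simp; omega
        rw [uPos_of_len2 this, mul_zero]
      · have hk1 : k = r + 1 := by omega
        subst hk1
        have : (uPos i ^ r) (List.replicate (min (r+1) (r+1)) i) = 0 := by
          by_contra hc
          obtain ⟨-, hle⟩ := uPos_pow_support i r _ hc
          simp at hle
        rw [this, zero_mul]

lemma uNeg_pow_support (i : β) (r : ℕ) :
    ∀ w : List β, (uNeg i ^ r) w ≠ 0 → w = List.replicate w.length i := by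
  induction r with
  | zero =>
    intro w hw
    rw [pow_zero] at hw
    have : w = [] := by
      by_contra hc
      exact hw (one_apply_ne hc)
    subst this
    rfl
  | succ r ih =>
    intro w hw
    rw [pow_succ, mul_apply] at hw
    obtain ⟨k, -, hk⟩ := Finset.exists_ne_zero_of_sum_ne_zero hw
    have h1 : (uNeg i ^ r) (w.take k) ≠ 0 := fun h => hk (by rw [h, zero_mul])
    have h2 : uNeg i (w.drop k) ≠ 0 := fun h => hk (by rw [h, mul_zero])
    have ht := ih _ h1
    have hd := uNeg_ne_zero h2
    have hsplit : w = w.take k ++ w.drop k := (List.take_append_drop k w).symm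
    rw [ht, hd, ← List.replicate_add] at hsplit
    rw [hsplit]
    simp

lemma uNeg_pow_sign (i : β) (r : ℕ) :
    (∀ k, 0 ≤ (-1:ℤ)^k * (uNeg i ^ r) (List.replicate k i)) ∧
      0 < (-1:ℤ)^r * (uNeg i ^ r) (List.replicate r i) := by
  induction r with
  | zero =>
    constructor
    · intro k
      cases k with
      | zero =>
        rw [pow_zero, pow_zero]
        rw [show List.replicate 0 i = [] from rfl, one_apply_nil]
        norm_num
      | succ m =>
        rw [pow_zero, one_apply_ne (by simp : List.replicate (m+1) i ≠ [])]
        norm_num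
    · rw [pow_zero, pow_zero, show List.replicate 0 i = [] from rfl, one_apply_nil]
      norm_num
  | succ r ih =>
    have key : ∀ k, (-1:ℤ)^k * (uNeg i ^ (r+1)) (List.replicate k i) =
        ∑ j ∈ Finset.range (k + 1),
          (-1:ℤ)^j * (uNeg i ^ r) (List.replicate j i) := by
      intro k
      rw [pow_succ, mul_apply]
      have hlen : (List.replicate k i).length = k := by simp
      rw [hlen, Finset.mul_sum]
      refine Finset.sum_congr rfl (fun j hj => ?_)
      rw [Finset.mem_range] at hj
      have hj' : j ≤ k := by omega
      rw [List.take_replicate, List.drop_replicate]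
      have h1 : min j k = j := by omega
      rw [h1, uNeg_replicate]
      have hpow : (-1:ℤ)^k * (-1:ℤ)^(k-j) = (-1:ℤ)^j * ((-1:ℤ)^(k-j) * (-1:ℤ)^(k-j)) := by
        rw [← pow_add, ← pow_add, ← pow_add]
        congr 1
        omega
      have hsq : (-1:ℤ)^(k-j) * (-1:ℤ)^(k-j) = 1 := by
        rw [← pow_add, ← two_mul, pow_mul]
        norm_num
      calc (-1:ℤ)^k * ((uNeg i ^ r) (List.replicate j i) * (-1:ℤ)^(k-j))
          = ((-1:ℤ)^k * (-1:ℤ)^(k-j)) * (uNeg i ^ r) (List.replicate j i) := by ring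
        _ = (-1:ℤ)^j * (uNeg i ^ r) (List.replicate j i) := by
            rw [hpow, hsq, mul_one]
    constructor
    · intro k
      rw [key]
      exact Finset.sum_nonneg (fun j _ => ih.1 j)
    · rw [key]
      refine Finset.sum_pos' (fun j _ => ih.1 j) ⟨r, Finset.mem_range.2 (by omega), ih.2⟩


/-! ### braid relation forces equal images -/

lemma mul_apply_nil (f g : M β) : (f * g) [] = f [] * g [] := by
  rw [mul_apply]
  simp

lemma braid_aux {A B : M β} (hA : A [] = 1) (hB : B [] = 1)
    (h : A * B * A = B * A * B) : ∀ n (w : List β), w.length = n → A w = B w := by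
  intro n
  induction n using Nat.strong_induction_on with
  | _ n IH =>
    intro w hw
    cases n with
    | zero =>
      rw [List.length_eq_zero_iff] at hw
      subst hw
      rw [hA, hB]
    | succ m =>
      have agree : ∀ v : List β, v.length < m + 1 → A v = B v :=
        fun v hv => IH v.length hv v rfl
      have prodshort : ∀ v : List β, v.length < m + 1 → (A * B) v = (B * A) v := by
        intro v hv
        rw [mul_apply, mul_apply]
        refine Finset.sum_congr rfl (fun k hk => ?_)
        have h1 : (v.take k).length < m + 1 := by
          rw [List.length_take]; omega
        have h2 : (v.drop k).length < m + 1 := by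
          rw [List.length_drop]; omega
        rw [agree _ h1, (agree _ h2).symm]
      have expand : ∀ f g : M β, (f * g) w =
          f [] * g w + (∑ k ∈ Finset.range m, f (w.take (k+1)) * g (w.drop (k+1)))
            + f w * g [] := by
        intro f g
        rw [mul_apply, hw, Finset.sum_range_succ, Finset.sum_range_succ']
        rw [List.take_zero, List.drop_zero,
          show w.take (m+1) = w from by rw [← hw]; exact List.take_length,
          show w.drop (m+1) = [] from by rw [← hw]; exact List.drop_length]
        ring
      have lenshort : ∀ k, k ∈ Finset.range m → (w.take (k+1)).length < m + 1 ∧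
          (w.drop (k+1)).length < m + 1 := by
        intro k hk
        rw [Finset.mem_range] at hk
        constructor
        · rw [List.length_take]; omega
        · rw [List.length_drop]; omega
      have hcross : (A * B) w = (B * A) w := by
        rw [expand A B, expand B A, hA, hB]
        have hS : (∑ k ∈ Finset.range m, A (w.take (k+1)) * B (w.drop (k+1))) =
            ∑ k ∈ Finset.range m, B (w.take (k+1)) * A (w.drop (k+1)) := by
          refine Finset.sum_congr rfl (fun k hk => ?_)
          obtain ⟨h1, h2⟩ := lenshort k hk
          rw [agree _ h1, (agree _ h2).symm]
        rw [hS]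
        ring
      have hmain := congrArg (fun f : M β => f w) h
      try simp only at hmain
      rw [expand (A*B) A, expand (B*A) B, mul_apply_nil, mul_apply_nil, hA, hB,
        one_mul, one_mul, mul_one, mul_one] at hmain
      have hT : (∑ k ∈ Finset.range m, (A*B) (w.take (k+1)) * A (w.drop (k+1))) =
          ∑ k ∈ Finset.range m, (B*A) (w.take (k+1)) * B (w.drop (k+1)) := by
        refine Finset.sum_congr rfl (fun k hk => ?_)
        obtain ⟨h1, h2⟩ := lenshort k hk
        rw [prodshort _ h1, agree _ h2]
      rw [hT, hcross] at hmain
      linarith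

lemma mu_eq_of_braid {a b : FreeGroup β} (h : a * b * a = b * a * b)
    (hinj : Function.Injective (mu (β := β))) : a = b := by
  apply hinj
  apply Units.ext
  funext w
  have hmu : mu a * mu b * mu a = mu b * mu a * mu b := by
    rw [← map_mul, ← map_mul, ← map_mul, ← map_mul, h]
  have hval := congrArg Units.val hmu
  simp only [Units.val_mul] at hval
  exact braid_aux (mu_val_nil a) (mu_val_nil b) hval w.length w rfl


/-! ### syllable machinery on plain words -/

def syl : List β → List β
  | [] => []
  | [a] => [a]
  | a :: b :: l => if a = b then syl (b :: l) else a :: syl (b :: l)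

lemma syl_nil : syl ([] : List β) = [] := rfl

lemma syl_single (a : β) : syl [a] = [a] := rfl

lemma syl_cons_cons (a b : β) (l : List β) :
    syl (a :: b :: l) = if a = b then syl (b :: l) else a :: syl (b :: l) := rfl

/-- `headNe a v` : `v` is empty or starts with a letter different from `a`. -/
def headNe (a : β) : List β → Prop
  | [] => True
  | b :: _ => a ≠ b

lemma syl_cons_headNe {a : β} {v : List β} (h : headNe a v) :
    syl (a :: v) = a :: syl v := by
  cases v with
  | nil => rfl
  | cons b t => rw [syl_cons_cons, if_neg h]

lemma syl_run (j : β) (v : List β) : ∀ m, 1 ≤ m →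
    syl (List.replicate m j ++ v) = syl (j :: v) := by
  intro m
  induction m with
  | zero => omega
  | succ m ih =>
    intro _
    cases m with
    | zero => rfl
    | succ m' =>
      have h1 : List.replicate (m' + 1 + 1) j ++ v
          = j :: j :: (List.replicate m' j ++ v) := by
        rw [List.replicate_succ, List.replicate_succ]
        rfl
      have h2 : List.replicate (m' + 1) j ++ v = j :: (List.replicate m' j ++ v) := by
        rw [List.replicate_succ]
        rfl
      rw [h1, syl_cons_cons, if_pos rfl, ← h2, ih (by omega)]

lemma syl_cons_length (a : β) (v : List β) :
    (syl (a :: v)).length ≤ (syl v).length + 1 := by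
  cases v with
  | nil => simp [syl_single, syl_nil]
  | cons b t =>
    rw [syl_cons_cons]
    by_cases h : a = b
    · rw [if_pos h]; omega
    · rw [if_neg h]; simp

lemma syl_replicate_append (i : β) (r : ℕ) (hr : 1 ≤ r) {v : List β} (hv : headNe i v) :
    syl (List.replicate r i ++ v) = i :: syl v := by
  rw [syl_run i v r hr, syl_cons_headNe hv]

/-- `Fits js w` : `w` is a concatenation of powers of the letters of `js`, in order. -/
def Fits : List β → List β → Prop
  | [], w => w = []
  | j :: js, w => ∃ m w', w = List.replicate m j ++ w' ∧ Fits js w'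

lemma fits_syl_length : ∀ js w : List β, Fits js w → (syl w).length ≤ js.length := by
  intro js
  induction js with
  | nil =>
    intro w h
    rw [show w = [] from h, syl_nil]
  | cons j js ih =>
    rintro w ⟨m, w', rfl, hf⟩
    have h1 := ih w' hf
    have h2 : (syl (List.replicate m j ++ w')).length ≤ (syl w').length + 1 := by
      cases m with
      | zero => simp
      | succ m' =>
        rw [syl_run j w' (m'+1) (by omega)]
        exact syl_cons_length j w'
    simp only [List.length_cons]
    omega

/-! ### reduced words -/

/-- no adjacent pair with the same letter and different signs -/
def NoCancel (L : List (β × Bool)) : Prop :=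
  ∀ (l₁ : List (β × Bool)) (x : β) (c d : Bool) (l₂ : List (β × Bool)),
    L = l₁ ++ (x, c) :: (x, d) :: l₂ → c = d

lemma noCancel_of_reduce {L : List (β × Bool)} (h : FreeGroup.reduce L = L) :
    NoCancel L := by
  intro l₁ x c d l₂ hL
  by_contra hcd
  have hd : d = !c := by cases c <;> cases d <;> simp_all
  subst hd
  exact FreeGroup.reduce.not (h.trans hL)

lemma noCancel_suffix {L₁ L₂ : List (β × Bool)} (h : NoCancel (L₁ ++ L₂)) :
    NoCancel L₂ :=
  fun l₁ x c d l₂ hL => h (L₁ ++ l₁) x c d l₂ (by rw [hL, List.append_assoc])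

lemma head_dropWhile_false (p : β × Bool → Bool) :
    ∀ (l : List (β × Bool)) (x : β × Bool), (l.dropWhile p).head? = some x → p x = false := by
  intro l
  induction l with
  | nil => intro x hx; simp [List.dropWhile] at hx
  | cons a t ih =>
    intro x hx
    rw [List.dropWhile_cons] at hx
    by_cases hpa : p a = true
    · rw [if_pos hpa] at hx
      exact ih x hx
    · rw [if_neg hpa] at hx
      simp only [List.head?_cons, Option.some.injEq] at hx
      subst hx
      simpa using hpa

lemma syllable_decomp {L : List (β × Bool)} (hL : NoCancel L) {i : β} {s : Bool}
    (hhead : L.head? = some (i, s)) :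
    ∃ r L₂, 1 ≤ r ∧ L = List.replicate r (i, s) ++ L₂ ∧
      headNe i (L₂.map Prod.fst) := by
  classical
  set p : β × Bool → Bool := fun q => q = (i, s) with hp
  set T := L.takeWhile p with hT
  set D := L.dropWhile p with hD
  have hsplit : T ++ D = L := List.takeWhile_append_dropWhile
  have hTrep : T = List.replicate T.length (i, s) := by
    rw [List.eq_replicate_iff]
    refine ⟨rfl, fun b hb => ?_⟩
    have := List.mem_takeWhile_imp hb
    simpa [hp] using this
  have hTne : T ≠ [] := by
    intro hTnil
    rw [hTnil, List.nil_append] at hsplit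
    cases L with
    | nil => simp at hhead
    | cons q t =>
      have hq : q = (i, s) := by
        simp only [List.head?_cons, Option.some.injEq] at hhead
        exact hhead
      have := head_dropWhile_false p (q :: t) q (by rw [← hD, hsplit]; rfl)
      rw [hq] at this
      simp [hp] at this
  refine ⟨T.length, D, ?_, by rw [← hTrep]; exact hsplit.symm, ?_⟩
  · have : 0 < T.length := List.length_pos_iff.2 hTne
    omega
  · cases hDc : D with
    | nil => trivial
    | cons q t =>
      show i ≠ q.1
      intro hiq
      have hq : p q = false := head_dropWhile_false p L q (by rw [← hD, hDc]; rfl)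
      have hqs : q.2 ≠ s := by
        intro h2
        rw [hp] at hq
        have : q = (i, s) := Prod.ext hiq.symm h2
        rw [this] at hq
        simp at hq
      obtain ⟨r', hr'⟩ : ∃ r', T.length = r' + 1 :=
        ⟨T.length - 1, by have : 0 < T.length := List.length_pos_iff.2 hTne; omega⟩
      have hLrw : L = List.replicate r' (i, s) ++ (i, s) :: (i, q.2) :: t := by
        rw [← hsplit, hTrep, hDc, hr', List.replicate_succ']
        rw [List.append_assoc]
        congr 1
        have : q = (i, q.2) := Prod.ext hiq.symm rfl
        rw [← this]
        rfl
      exact hqs (hL _ i s q.2 t hLrw).symm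

/-! ### values of `mu` on syllables -/

lemma mk_replicate_pos (i : β) (r : ℕ) :
    FreeGroup.mk (List.replicate r (i, true)) = (FreeGroup.of i)^r := by
  induction r with
  | zero => rw [pow_zero]; exact FreeGroup.one_eq_mk.symm
  | succ r ih =>
    rw [List.replicate_succ, pow_succ',
      show ((i, true) :: List.replicate r (i, true))
        = [(i, true)] ++ List.replicate r (i, true) from rfl,
      ← FreeGroup.mul_mk, ih]
    rfl

lemma mk_replicate_neg (i : β) (r : ℕ) :
    FreeGroup.mk (List.replicate r (i, false)) = ((FreeGroup.of i)⁻¹)^r := by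
  induction r with
  | zero => rw [pow_zero]; exact FreeGroup.one_eq_mk.symm
  | succ r ih =>
    rw [List.replicate_succ, pow_succ',
      show ((i, false) :: List.replicate r (i, false))
        = [(i, false)] ++ List.replicate r (i, false) from rfl,
      ← FreeGroup.mul_mk, ih]
    have hof : FreeGroup.mk [(i, false)] = (FreeGroup.of i)⁻¹ := by
      show FreeGroup.mk [(i, false)] = (FreeGroup.mk [(i, true)])⁻¹
      rw [FreeGroup.inv_mk]
      try rfl
    rw [hof]

lemma mu_mk_replicate_val (i : β) (s : Bool) (r : ℕ) :
    ((mu (FreeGroup.mk (List.replicate r (i, s))) : (M β)ˣ) : M β)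
      = (cond s (uPos i) (uNeg i)) ^ r := by
  cases s
  · rw [mk_replicate_neg, map_pow, map_inv, Units.val_pow_eq_pow_val]
    rw [show mu (FreeGroup.of i) = U i from FreeGroup.lift_apply_of]
    rfl
  · rw [mk_replicate_pos, map_pow, Units.val_pow_eq_pow_val]
    rw [show mu (FreeGroup.of i) = U i from FreeGroup.lift_apply_of]
    rfl

def negCount (L : List (β × Bool)) : ℕ := (L.filter (fun p => p.2 = false)).length

/-! ### the main induction -/

theorem main_induction : ∀ n (L : List (β × Bool)), L.length ≤ n → NoCancel L →
    (∀ w, ((mu (FreeGroup.mk L) : (M β)ˣ) : M β) w ≠ 0 → Fits (syl (L.map Prod.fst)) w) ∧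
      0 < (-1:ℤ)^(negCount L) *
        ((mu (FreeGroup.mk L) : (M β)ˣ) : M β) (L.map Prod.fst) := by
  intro n
  induction n with
  | zero =>
    intro L hlen _
    have hL : L = [] := List.length_eq_zero_iff.1 (by omega)
    subst hL
    have h1 : FreeGroup.mk ([] : List (β × Bool)) = 1 := FreeGroup.one_eq_mk.symm
    rw [h1, map_one]
    constructor
    · intro w hw
      have : w = [] := by
        by_contra hc
        exact hw (one_apply_ne hc)
      subst this
      rfl
    · rw [show negCount ([] : List (β × Bool)) = 0 from rfl]
      rw [show (([] : List (β × Bool)).map Prod.fst) = [] from rfl]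
      rw [show ((1 : (M β)ˣ) : M β) = (1 : M β) from rfl, one_apply_nil]
      norm_num
  | succ n IH =>
    intro L hlen hNC
    cases hLc : L with
    | nil =>
      subst hLc
      have h1 : FreeGroup.mk ([] : List (β × Bool)) = 1 := FreeGroup.one_eq_mk.symm
      rw [h1, map_one]
      constructor
      · intro w hw
        have : w = [] := by
          by_contra hc
          exact hw (one_apply_ne hc)
        subst this
        rfl
      · rw [show negCount ([] : List (β × Bool)) = 0 from rfl]
        rw [show (([] : List (β × Bool)).map Prod.fst) = [] from rfl]
        rw [show ((1 : (M β)ˣ) : M β) = (1 : M β) from rfl, one_apply_nil]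
        norm_num
    | cons q L' =>
      obtain ⟨i, s⟩ := q
      subst hLc
      obtain ⟨r, L₂, hr, hdecomp, hhne⟩ := syllable_decomp hNC (by rfl)
      have hlen2 : L₂.length ≤ n := by
        have := congrArg List.length hdecomp
        simp only [List.length_append, List.length_replicate, List.length_cons] at this hlen
        omega
      have hNC₂ : NoCancel L₂ := by
        rw [hdecomp] at hNC
        exact noCancel_suffix hNC
      obtain ⟨supp₂, pos₂⟩ := IH L₂ hlen2 hNC₂
      set Q : M β := (cond s (uPos i) (uNeg i)) ^ r with hQ
      set R : M β := ((mu (FreeGroup.mk L₂) : (M β)ˣ) : M β) with hR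
      set W₂ : List β := L₂.map Prod.fst with hW₂
      have hval : ((mu (FreeGroup.mk ((i,s) :: L')) : (M β)ˣ) : M β) = Q * R := by
        rw [hdecomp, ← FreeGroup.mul_mk, map_mul, Units.val_mul, mu_mk_replicate_val]
      have hW : ((i,s) :: L').map Prod.fst = List.replicate r i ++ W₂ := by
        rw [hdecomp, List.map_append, List.map_replicate]
      have q_supp : ∀ w' : List β, Q w' ≠ 0 → w' = List.replicate w'.length i := by
        intro w' hw'
        rw [hQ] at hw'
        cases s with
        | true => exact (uPos_pow_support i r w' hw').1
        | false => exact uNeg_pow_support i r w' hw'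
      have nofit : ∀ t, 1 ≤ t → R (List.replicate t i ++ W₂) = 0 := by
        intro t ht
        by_contra hc
        have hfits := supp₂ _ hc
        have hcount := fits_syl_length _ _ hfits
        rw [syl_replicate_append i t ht hhne] at hcount
        simp only [List.length_cons] at hcount
        omega
      constructor
      · intro w hw
        rw [hval, mul_apply] at hw
        obtain ⟨k, -, hk⟩ := Finset.exists_ne_zero_of_sum_ne_zero hw
        have h1 : Q (w.take k) ≠ 0 := fun h => hk (by rw [h, zero_mul])
        have h2 : R (w.drop k) ≠ 0 := fun h => hk (by rw [h, mul_zero])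
        have htake := q_supp _ h1
        have hfits := supp₂ _ h2
        rw [hW, syl_replicate_append i r hr hhne]
        exact ⟨(w.take k).length, w.drop k,
          by rw [← htake]; exact (List.take_append_drop k w).symm, hfits⟩
      · have hcountL : negCount ((i,s) :: L') = (if s then 0 else r) + negCount L₂ := by
          rw [hdecomp, negCount, List.filter_append, List.length_append,
            List.filter_replicate]
          cases s
          · simp [negCount]
          · simp [negCount]
        have hsingle : ((mu (FreeGroup.mk ((i,s) :: L')) : (M β)ˣ) : M β)
            (((i,s) :: L').map Prod.fst) = Q (List.replicate r i) * R W₂ := by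
          rw [hval, hW, mul_apply]
          have hlenW : (List.replicate r i ++ W₂).length = r + W₂.length := by simp
          rw [hlenW]
          refine (Finset.sum_eq_single_of_mem r (Finset.mem_range.2 (by omega)) ?_).trans ?_
          · intro k hk hkr
            rw [Finset.mem_range] at hk
            rcases Nat.lt_or_ge k r with hlt | hge
            · have hdropk : (List.replicate r i ++ W₂).drop k
                  = List.replicate (r - k) i ++ W₂ := by
                rw [List.drop_append_of_le_length (by simp; omega), List.drop_replicate]
              rw [hdropk, nofit (r - k) (by omega), mul_zero]
            · have hkgt : r < k := by omega
              have hW₂ne : 1 ≤ W₂.length := by omega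
              have htakek : (List.replicate r i ++ W₂).take k
                  = List.replicate r i ++ W₂.take (k - r) := by
                rw [List.take_append, List.take_of_length_le (by simp; omega)]
                congr 2
                simp
              have hQ0 : Q ((List.replicate r i ++ W₂).take k) = 0 := by
                by_contra hc
                have := q_supp _ hc
                obtain ⟨q2, t2, hL₂c⟩ : ∃ q2 t2, L₂ = q2 :: t2 := by
                  cases L₂ with
                  | nil => simp [hW₂] at hW₂ne
                  | cons a t => exact ⟨a, t, rfl⟩
                have hq2 : q2.1 ∈ (List.replicate r i ++ W₂).take k := by
                  rw [htakek]
                  refine List.mem_append_right _ ?_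
                  rw [hW₂, hL₂c]
                  obtain ⟨j, hj⟩ : ∃ j, k - r = j + 1 := ⟨k - r - 1, by omega⟩
                  rw [List.map_cons, hj, List.take_succ_cons]
                  exact List.mem_cons_self
                rw [this] at hq2
                have := List.eq_of_mem_replicate hq2
                rw [hW₂, hL₂c] at hhne
                exact hhne this.symm
              rw [hQ0, zero_mul]
          · congr 1
            · congr 1
              rw [List.take_append_of_le_length (by simp), List.take_of_length_le (by simp)]
            · rw [List.drop_append_of_le_length (by simp), List.drop_replicate]
              simp
        rw [hsingle, hcountL, pow_add, ← Bool.cond_eq_ite]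
        have q_pos : 0 < (-1:ℤ)^(cond s 0 r) * Q (List.replicate r i) := by
          rw [hQ]
          cases s
          · exact (uNeg_pow_sign i r).2
          · show 0 < (-1:ℤ)^(0:ℕ) * (uPos i ^ r) (List.replicate r i)
            rw [uPos_pow_full]
            norm_num
        have hp : 0 < ((-1:ℤ)^(cond s 0 r) * Q (List.replicate r i)) *
            ((-1:ℤ)^(negCount L₂) * R W₂) := mul_pos q_pos pos₂
        calc (0:ℤ) < _ := hp
        _ = (-1:ℤ)^(cond s 0 r) * (-1:ℤ)^(negCount L₂) *
              (Q (List.replicate r i) * R W₂) := by ring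

theorem mu_eq_one {g : FreeGroup β} (h : mu g = 1) : g = 1 := by
  by_contra hg
  have hred : FreeGroup.reduce g.toWord = g.toWord := FreeGroup.reduce_toWord g
  have hNC : NoCancel g.toWord := noCancel_of_reduce hred
  obtain ⟨-, hpos⟩ := main_induction g.toWord.length g.toWord (le_refl _) hNC
  rw [FreeGroup.mk_toWord, h] at hpos
  have hWne : g.toWord.map Prod.fst ≠ [] := by
    simp only [ne_eq, List.map_eq_nil_iff]
    rw [FreeGroup.toWord_eq_nil_iff]
    exact hg
  rw [show ((1 : (M β)ˣ) : M β) = (1 : M β) from rfl, one_apply_ne hWne] at hpos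
  simp at hpos

theorem mu_injective : Function.Injective (mu (β := β)) := by
  intro a b hab
  have h1 : mu (a * b⁻¹) = 1 := by
    rw [map_mul, map_inv, hab, mul_inv_cancel]
  have := mu_eq_one h1
  exact mul_inv_eq_one.1 this

/-- The key free-group fact: the braid relation forces equality. -/
theorem braid_eq {a b : FreeGroup β} (h : a * b * a = b * a * b) : a = b :=
  mu_eq_of_braid h mu_injective

end MagnusAux


theorem braid_eq_free {β : Type*} {a b : FreeGroup β} (h : a * b * a = b * a * b) : a = b := by
  classical
  exact MagnusAux.braid_eq h

/-- A group `G` is residually free if every nontrivial element has nontrivial image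
under some homomorphism to a free group. -/
def ResiduallyFree (G : Type u) [Group G] : Prop :=
  ∀ x : G, x ≠ 1 → ∃ (S : Type u) (f : G →* FreeGroup S), f x ≠ 1

/-- Relators for the braid group `B₃` on generators `σ₁, σ₂`. -/
def B3Rels : Set (FreeGroup (Fin 2)) :=
  { FreeGroup.of 0 * FreeGroup.of 1 * FreeGroup.of 0 *
      (FreeGroup.of 1 * FreeGroup.of 0 * FreeGroup.of 1)⁻¹ }

/-- The braid group `B₃` is not residually free. -/
theorem B3_not_residuallyFree : ¬ ResiduallyFree (PresentedGroup B3Rels) := by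
  intro h
  -- the braid relation holds in the presented group
  have hbraid : (PresentedGroup.of 0 : PresentedGroup B3Rels) * PresentedGroup.of 1 *
      PresentedGroup.of 0 = PresentedGroup.of 1 * PresentedGroup.of 0 * PresentedGroup.of 1 := by
    have hrel : (FreeGroup.of 0 * FreeGroup.of 1 * FreeGroup.of 0 *
        (FreeGroup.of 1 * FreeGroup.of 0 * FreeGroup.of 1)⁻¹ : FreeGroup (Fin 2)) ∈
        Subgroup.normalClosure B3Rels :=
      Subgroup.subset_normalClosure rfl
    have h1 : PresentedGroup.mk B3Rels
        (FreeGroup.of 0 * FreeGroup.of 1 * FreeGroup.of 0 *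
          (FreeGroup.of 1 * FreeGroup.of 0 * FreeGroup.of 1)⁻¹) = 1 :=
      (QuotientGroup.eq_one_iff _).2 hrel
    rw [map_mul, map_inv] at h1
    have h2 := mul_inv_eq_one.1 h1
    simp only [map_mul] at h2
    exact h2
  -- the commutator of the generators is a nontrivial element: detect it in S₃
  set x : PresentedGroup B3Rels :=
    PresentedGroup.of 0 * PresentedGroup.of 1 * (PresentedGroup.of 0)⁻¹ *
      (PresentedGroup.of 1)⁻¹ with hxdef
  have hx : x ≠ 1 := by
    intro hx1
    have hcond : ∀ r ∈ B3Rels, FreeGroup.lift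
        (fun j : Fin 2 => if j = 0 then Equiv.swap (0 : Fin 3) 1 else Equiv.swap (1 : Fin 3) 2)
        r = 1 := by
      intro r hr
      rw [show r = FreeGroup.of 0 * FreeGroup.of 1 * FreeGroup.of 0 *
        (FreeGroup.of 1 * FreeGroup.of 0 * FreeGroup.of 1)⁻¹ from hr]
      simp only [map_mul, map_inv, FreeGroup.lift_apply_of]
      decide
    have hphi := congrArg (PresentedGroup.toGroup hcond) hx1
    rw [hxdef] at hphi
    simp only [map_mul, map_inv, map_one, PresentedGroup.toGroup.of] at hphi
    revert hphi
    decide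
  obtain ⟨S, f, hf⟩ := h x hx
  apply hf
  have hb : f (PresentedGroup.of 0) * f (PresentedGroup.of 1) * f (PresentedGroup.of 0)
      = f (PresentedGroup.of 1) * f (PresentedGroup.of 0) * f (PresentedGroup.of 1) := by
    simpa only [map_mul] using congrArg f hbraid
  have heq : f (PresentedGroup.of 0) = f (PresentedGroup.of 1) := braid_eq_free hb
  rw [hxdef]
  simp only [map_mul, map_inv, heq]
  group
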